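/- Let q be a prime power, 1 ≤ k < n ≤ q², and let C = GRS_k(a,v) ⊆ 𝔽_{q²}^n be a generalized Reed–Solomon code with pairwise distinct a_j and nonzero v_j, satisfying C^{⊥H} ⊆ C. Let w ∈ 𝔽_{q²}^n be a nonzero vector with Σ_j w_j v_j a_j^l = 0 for all 0 ≤ l ≤ n−2. Fix an integer t_0 with (n−k)/2 ≤ t_0 < n−k and put t_1 = n − k − t_0. For 0 ≤ i < t_0 define g_i ∈ 𝔽_{q²}[D]^n by (g_i)_j = w_j a_j^i + (w_j a_j^{t_0+i})·D if i < t_1, and (g_i)_j = w_j a_j^i if t_1 ≤ i < t_0. Let V be the 𝔽_{q²}[D]-submodule of 𝔽_{q²}[D]^n generated by g_0,…,g_{t_0−1}. Then V ⊆ V^{⊥H}, i.e., for all u, x ∈ V one has Σ_{m≥0} Σ_{j=0}^{n−1} (coefficient of D^m in u_j)·(coefficient of D^m in x_j)^q = 0. -/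

import Mathlib

open Polynomial

/-- The generalized Reed–Solomon code. -/
noncomputable def grs {F : Type*} [Field F] (n k : ℕ) (a v : Fin n → F) :
    Submodule F (Fin n → F) :=
  (Polynomial.degreeLT F k).map (LinearMap.pi fun i => v i • Polynomial.leval (a i))

/-- The Hermitian dual code of a linear code C ⊆ (F_{q²})^n. -/
noncomputable def dualH {F : Type*} [Field F] (q n : ℕ) (C : Submodule F (Fin n → F)) :
    Submodule F (Fin n → F) where
  carrier := {x | ∀ y ∈ C, ∑ i, x i * (y i) ^ q = 0}
  add_mem' := by
    intro a b ha hb y hy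
    simp only [Set.mem_setOf_eq] at *
    simp [add_mul, Finset.sum_add_distrib, ha y hy, hb y hy]
  zero_mem' := by
    intro y hy; simp
  smul_mem' := by
    intro c x hx y hy
    simp only [Set.mem_setOf_eq] at *
    simp [smul_eq_mul, mul_assoc, ← Finset.mul_sum, hx y hy]

/-- The Hermitian pairing ⟨u,x⟩_H = Σ_{m≥0} Σ_j u_{j,m} (x_{j,m})^q on
F_{q²}[D]^n, where u_{j,m} is the coefficient of D^m in the j-th entry of u
(the sum over m has finitely many nonzero terms, supported in the coefficient
support of u). -/
noncomputable def hPair {F : Type*} [Field F] (q : ℕ) {n : ℕ}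
    (u x : Fin n → Polynomial F) : F :=
  ∑ j, ∑ m ∈ (u j).support, (u j).coeff m * ((x j).coeff m) ^ q

/-- The weight of u ∈ F_{q²}[D]^n: the total number of nonzero coefficients in
its n polynomial entries. -/
noncomputable def wtP {F : Type*} [Field F] {n : ℕ} (u : Fin n → Polynomial F) : ℕ :=
  ∑ j, (u j).support.card

section Aux

variable {F : Type*} [Field F] {q n : ℕ}

lemma hPair_eq_sum (u x : Fin n → Polynomial F) (S : Fin n → Finset ℕ)
    (hS : ∀ j, (u j).support ⊆ S j) :
    hPair q u x = ∑ j, ∑ m ∈ S j, (u j).coeff m * ((x j).coeff m) ^ q := by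
  unfold hPair
  refine Finset.sum_congr rfl fun j _ => ?_
  exact Finset.sum_subset (hS j) fun m _ hm => by
    rw [Polynomial.notMem_support_iff.mp hm, zero_mul]

lemma hPair_zero_left (x : Fin n → Polynomial F) : hPair q (0 : Fin n → Polynomial F) x = 0 := by
  simp [hPair]

lemma hPair_add_left (u u' x : Fin n → Polynomial F) :
    hPair q (u + u') x = hPair q u x + hPair q u' x := by
  rw [hPair_eq_sum (u + u') x (fun j => (u j).support ∪ (u' j).support)
      (fun j => by simpa using Polynomial.support_add),
    hPair_eq_sum u x (fun j => (u j).support ∪ (u' j).support)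
      (fun j => Finset.subset_union_left),
    hPair_eq_sum u' x (fun j => (u j).support ∪ (u' j).support)
      (fun j => Finset.subset_union_right)]
  simp [Polynomial.coeff_add, add_mul, Finset.sum_add_distrib]

lemma hPair_smulC_left (c : F) (u x : Fin n → Polynomial F) :
    hPair q ((Polynomial.C c) • u) x = c * hPair q u x := by
  rw [hPair_eq_sum _ x (fun j => (u j).support) (fun j => by
    rw [Pi.smul_apply, smul_eq_mul, ← Polynomial.smul_eq_C_mul]
    exact Polynomial.support_smul c (u j))]
  unfold hPair
  rw [Finset.mul_sum]
  refine Finset.sum_congr rfl fun j _ => ?_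
  rw [Finset.mul_sum]
  refine Finset.sum_congr rfl fun m _ => ?_
  rw [Pi.smul_apply, smul_eq_mul, Polynomial.coeff_C_mul]
  ring

lemma hPair_sum_left {ι : Type*} (s : Finset ι) (f : ι → Fin n → Polynomial F)
    (x : Fin n → Polynomial F) :
    hPair q (∑ i ∈ s, f i) x = ∑ i ∈ s, hPair q (f i) x := by
  classical
  induction s using Finset.cons_induction with
  | empty => simp [hPair_zero_left]
  | cons i s hi ih => rw [Finset.sum_cons, hPair_add_left, ih, Finset.sum_cons]

lemma hPair_psmul_left (p : Polynomial F) (u x : Fin n → Polynomial F) :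
    hPair q (p • u) x
      = ∑ m ∈ p.support, p.coeff m * hPair q ((Polynomial.X : Polynomial F) ^ m • u) x := by
  have hrep : p • u = ∑ m ∈ p.support,
      (Polynomial.C (p.coeff m)) • ((Polynomial.X : Polynomial F) ^ m • u) := by
    calc p • u = (∑ m ∈ p.support, Polynomial.C (p.coeff m) * Polynomial.X ^ m) • u := by
          rw [← Polynomial.as_sum_support_C_mul_X_pow]
      _ = _ := by
          rw [Finset.sum_smul]
          exact Finset.sum_congr rfl fun m _ => (mul_smul _ _ u)
  rw [hrep, hPair_sum_left]
  exact Finset.sum_congr rfl fun m _ => hPair_smulC_left _ _ _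

lemma hPair_zero_right (hq0 : q ≠ 0) (u : Fin n → Polynomial F) :
    hPair q u (0 : Fin n → Polynomial F) = 0 := by
  simp [hPair, zero_pow hq0]

lemma hPair_add_right (hq : ∀ y z : F, (y + z) ^ q = y ^ q + z ^ q)
    (u x x' : Fin n → Polynomial F) :
    hPair q u (x + x') = hPair q u x + hPair q u x' := by
  unfold hPair
  rw [← Finset.sum_add_distrib]
  refine Finset.sum_congr rfl fun j _ => ?_
  rw [← Finset.sum_add_distrib]
  refine Finset.sum_congr rfl fun m _ => ?_
  rw [Pi.add_apply, Polynomial.coeff_add, hq, mul_add]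

lemma hPair_smulC_right (c : F) (u x : Fin n → Polynomial F) :
    hPair q u ((Polynomial.C c) • x) = c ^ q * hPair q u x := by
  unfold hPair
  rw [Finset.mul_sum]
  refine Finset.sum_congr rfl fun j _ => ?_
  rw [Finset.mul_sum]
  refine Finset.sum_congr rfl fun m _ => ?_
  rw [Pi.smul_apply, smul_eq_mul, Polynomial.coeff_C_mul, mul_pow]
  ring

lemma hPair_sum_right (hq : ∀ y z : F, (y + z) ^ q = y ^ q + z ^ q) (hq0 : q ≠ 0)
    {ι : Type*} (s : Finset ι) (u : Fin n → Polynomial F) (f : ι → Fin n → Polynomial F) :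
    hPair q u (∑ i ∈ s, f i) = ∑ i ∈ s, hPair q u (f i) := by
  classical
  induction s using Finset.cons_induction with
  | empty => simp [hPair_zero_right hq0]
  | cons i s hi ih => rw [Finset.sum_cons, hPair_add_right hq, ih, Finset.sum_cons]

lemma hPair_psmul_right (hq : ∀ y z : F, (y + z) ^ q = y ^ q + z ^ q) (hq0 : q ≠ 0)
    (p : Polynomial F) (u x : Fin n → Polynomial F) :
    hPair q u (p • x)
      = ∑ m ∈ p.support, (p.coeff m) ^ q * hPair q u ((Polynomial.X : Polynomial F) ^ m • x) := by
  have hrep : p • x = ∑ m ∈ p.support,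
      (Polynomial.C (p.coeff m)) • ((Polynomial.X : Polynomial F) ^ m • x) := by
    calc p • x = (∑ m ∈ p.support, Polynomial.C (p.coeff m) * Polynomial.X ^ m) • x := by
          rw [← Polynomial.as_sum_support_C_mul_X_pow]
      _ = _ := by
          rw [Finset.sum_smul]
          exact Finset.sum_congr rfl fun m _ => (mul_smul _ _ x)
  rw [hrep, hPair_sum_right hq hq0]
  exact Finset.sum_congr rfl fun m _ => hPair_smulC_right _ _ _

end Aux

/-- for a Hermitian dual-containing GRS code, the convolutional
code V generated by the rows g_i of G(D) = H̃₀ + H̃₁ D (obtained by splitting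
the parity check matrix into its first t₀ rows and remaining t₁ = n−k−t₀ rows,
(n−k)/2 ≤ t₀ < n−k) is self-orthogonal for the Hermitian pairing: V ⊆ V^{⊥H}. -/
theorem stmt_15 (q : ℕ) (hpp : IsPrimePow q)
    (F : Type*) [Field F] [Fintype F] (hF : Fintype.card F = q ^ 2)
    (n k : ℕ) (hk : 1 ≤ k) (hkn : k < n) (hn : n ≤ q ^ 2)
    (a v : Fin n → F) (ha : Function.Injective a) (hv : ∀ i, v i ≠ 0)
    (hC : dualH q n (grs n k a v) ≤ grs n k a v)
    (w : Fin n → F) (hw0 : w ≠ 0)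
    (hw : ∀ l : ℕ, l ≤ n - 2 → ∑ j, w j * v j * a j ^ l = 0)
    (t0 t1 : ℕ) (ht0a : n - k ≤ 2 * t0) (ht0b : t0 < n - k) (ht1 : t1 = n - k - t0)
    (g : Fin t0 → Fin n → Polynomial F)
    (hg : ∀ i j, g i j =
      if (i : ℕ) < t1 then
        Polynomial.C (w j * a j ^ (i : ℕ)) +
          Polynomial.C (w j * a j ^ (t0 + (i : ℕ))) * Polynomial.X
      else Polynomial.C (w j * a j ^ (i : ℕ)))
    (V : Submodule (Polynomial F) (Fin n → Polynomial F))
    (hV : V = Submodule.span (Polynomial F) (Set.range g)) :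
    ∀ u ∈ V, ∀ x ∈ V, hPair q u x = 0 := by
  classical
  -- basic facts about q and the characteristic
  obtain ⟨p, e, hp, he, hpe⟩ := hpp
  have hp' : p.Prime := Nat.prime_iff.mpr hp
  haveI : Fact p.Prime := ⟨hp'⟩
  have hq0 : q ≠ 0 := by
    rw [← hpe]; exact pow_ne_zero _ hp'.ne_zero
  haveI hcharF : CharP F p := by
    haveI : CharP F (ringChar F) := ringChar.charP F
    have hrp : (ringChar F).Prime := CharP.char_is_prime F (ringChar F)
    obtain ⟨m, _, hcard⟩ := FiniteField.card F (ringChar F)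
    have hdvd : p ∣ ringChar F := by
      have h1 : p ∣ ringChar F ^ (m : ℕ) := by
        rw [← hcard, hF, ← hpe, ← pow_mul]
        exact dvd_pow_self p (by positivity)
      exact hp'.dvd_of_dvd_pow h1
    have : p = ringChar F := (Nat.prime_dvd_prime_iff_eq hp' hrp).mp hdvd
    rw [this]; exact ringChar.charP F
  have hq_add : ∀ y z : F, (y + z) ^ q = y ^ q + z ^ q := by
    intro y z; rw [← hpe]; exact add_pow_char_pow ..
  have hq_sum : ∀ (s : Finset (Fin n)) (f : Fin n → F),
      (∑ i ∈ s, f i) ^ q = ∑ i ∈ s, (f i) ^ q := by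
    intro s f
    induction s using Finset.cons_induction with
    | empty => simp [zero_pow hq0]
    | cons i s hi ih => rw [Finset.sum_cons, hq_add, ih, Finset.sum_cons]
  -- members of the GRS code, explicitly
  have hmem_grs : ∀ y ∈ grs n k a v, ∃ f : Polynomial F, f.natDegree < k ∧
      y = fun j => v j * f.eval (a j) := by
    intro y hy
    obtain ⟨f, hf, rfl⟩ := Submodule.mem_map.mp hy
    have hfd : f.natDegree < k := by
      by_cases h0 : f = 0
      · simpa [h0] using (show 0 < k from hk)
      · exact (Polynomial.natDegree_lt_iff_degree_lt h0).mpr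
          (Polynomial.mem_degreeLT.mp hf)
    refine ⟨f, hfd, ?_⟩
    funext j
    simp [LinearMap.pi_apply, smul_eq_mul]
  -- step A : the vectors (w^q a^{qβ}) are in the Hermitian dual
  have hdual : ∀ β : ℕ, β < n - k →
      (fun j => (w j) ^ q * (a j) ^ (q * β)) ∈ dualH q n (grs n k a v) := by
    intro β hβ y hy
    obtain ⟨f, hfd, rfl⟩ := hmem_grs y hy
    have hterm : ∀ j : Fin n, (w j) ^ q * (a j) ^ (q * β) * (v j * f.eval (a j)) ^ q
        = (w j * v j * a j ^ β * f.eval (a j)) ^ q := by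
      intro j
      rw [mul_pow, mul_pow, mul_pow, ← pow_mul, mul_comm β q]
      ring
    calc ∑ j, (w j) ^ q * (a j) ^ (q * β) * (v j * f.eval (a j)) ^ q
        = ∑ j, (w j * v j * a j ^ β * f.eval (a j)) ^ q :=
          Finset.sum_congr rfl fun j _ => hterm j
      _ = (∑ j, w j * v j * a j ^ β * f.eval (a j)) ^ q := (hq_sum _ _).symm
      _ = 0 := by
          have hinner : ∑ j, w j * v j * a j ^ β * f.eval (a j) = 0 := by
            have : ∀ j : Fin n, w j * v j * a j ^ β * f.eval (a j)
                = ∑ m ∈ Finset.range k, f.coeff m * (w j * v j * a j ^ (β + m)) := by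
              intro j
              rw [Polynomial.eval_eq_sum_range' hfd, Finset.mul_sum]
              exact Finset.sum_congr rfl fun m _ => by rw [pow_add]; ring
            rw [Finset.sum_congr rfl fun j _ => this j, Finset.sum_comm]
            apply Finset.sum_eq_zero
            intro m hm
            rw [← Finset.mul_sum, hw (β + m) (by
              have := Finset.mem_range.mp hm; omega), mul_zero]
          rw [hinner, zero_pow hq0]
  -- step B : orthogonality of code to the rows
  have horth : ∀ α : ℕ, α < n - k → ∀ y ∈ grs n k a v, ∑ j, w j * a j ^ α * y j = 0 := by
    intro α hα y hy
    obtain ⟨f, hfd, rfl⟩ := hmem_grs y hy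
    have : ∀ j : Fin n, w j * a j ^ α * (v j * f.eval (a j))
        = ∑ m ∈ Finset.range k, f.coeff m * (w j * v j * a j ^ (α + m)) := by
      intro j
      rw [Polynomial.eval_eq_sum_range' hfd, Finset.mul_sum, Finset.mul_sum]
      exact Finset.sum_congr rfl fun m _ => by rw [pow_add]; ring
    rw [Finset.sum_congr rfl fun j _ => this j, Finset.sum_comm]
    apply Finset.sum_eq_zero
    intro m hm
    rw [← Finset.mul_sum, hw (α + m) (by
      have := Finset.mem_range.mp hm; omega), mul_zero]
  -- the key orthogonality of rows
  have key : ∀ α β : ℕ, α < n - k → β < n - k →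
      ∑ j, w j * a j ^ α * (w j * a j ^ β) ^ q = 0 := by
    intro α β hα hβ
    have h1 : (fun j => (w j) ^ q * (a j) ^ (q * β)) ∈ grs n k a v := hC (hdual β hβ)
    have h2 := horth α hα _ h1
    calc ∑ j, w j * a j ^ α * (w j * a j ^ β) ^ q
        = ∑ j, w j * a j ^ α * ((w j) ^ q * (a j) ^ (q * β)) := by
          refine Finset.sum_congr rfl fun j _ => ?_
          rw [mul_pow, ← pow_mul, mul_comm β q]
      _ = 0 := h2
  -- coefficients of the generators
  have hc0 : ∀ (i : Fin t0) (j : Fin n), (g i j).coeff 0 = w j * a j ^ (i : ℕ) := by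
    intro i j
    rw [hg]
    split
    · rw [Polynomial.coeff_add, Polynomial.coeff_C_mul, Polynomial.coeff_X_zero, mul_zero,
        add_zero, Polynomial.coeff_C_zero]
    · rw [Polynomial.coeff_C_zero]
  have hc1 : ∀ (i : Fin t0) (j : Fin n),
      (g i j).coeff 1 = if (i : ℕ) < t1 then w j * a j ^ (t0 + (i : ℕ)) else 0 := by
    intro i j
    rw [hg]
    split
    · rw [Polynomial.coeff_add, Polynomial.coeff_C_mul, Polynomial.coeff_X_one, mul_one,
        Polynomial.coeff_C, if_neg (by norm_num), zero_add]
    · rw [Polynomial.coeff_C, if_neg (by norm_num)]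
  have hcge : ∀ (i : Fin t0) (j : Fin n) (r : ℕ), 2 ≤ r → (g i j).coeff r = 0 := by
    intro i j r hr
    rw [hg]
    have h0 : r ≠ 0 := by omega
    have h1 : r ≠ 1 := by omega
    have h1' : (1 : ℕ) ≠ r := fun h => h1 h.symm
    split
    · rw [Polynomial.coeff_add, Polynomial.coeff_C_mul, Polynomial.coeff_X, if_neg h1',
        mul_zero, add_zero, Polynomial.coeff_C, if_neg h0]
    · rw [Polynomial.coeff_C, if_neg h0]
  -- orthogonality of all coefficient rows
  have key_g : ∀ (i k' : Fin t0) (r s : ℕ),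
      ∑ j, (g i j).coeff r * ((g k' j).coeff s) ^ q = 0 := by
    intro i k' r s
    have hi : (i : ℕ) < n - k := lt_of_lt_of_le i.2 (le_of_lt ht0b)
    have hk' : (k' : ℕ) < n - k := lt_of_lt_of_le k'.2 (le_of_lt ht0b)
    have hi1 : (i : ℕ) < t1 → t0 + (i : ℕ) < n - k := by omega
    have hk1 : (k' : ℕ) < t1 → t0 + (k' : ℕ) < n - k := by omega
    match r, s with
    | 0, 0 =>
      simp only [hc0]
      exact key _ _ hi hk'
    | 0, 1 =>
      simp only [hc0, hc1]
      by_cases h : (k' : ℕ) < t1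
      · simp only [if_pos h]
        exact key _ _ hi (hk1 h)
      · simp [if_neg h, zero_pow hq0]
    | 1, 0 =>
      simp only [hc0, hc1]
      by_cases h : (i : ℕ) < t1
      · simp only [if_pos h]
        exact key _ _ (hi1 h) hk'
      · simp [if_neg h]
    | 1, 1 =>
      simp only [hc1]
      by_cases h : (i : ℕ) < t1
      · by_cases h' : (k' : ℕ) < t1
        · simp only [if_pos h, if_pos h']
          exact key _ _ (hi1 h) (hk1 h')
        · simp [if_neg h', zero_pow hq0]
      · simp [if_neg h]
    | (r + 2), s =>
      apply Finset.sum_eq_zero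
      intro j _
      rw [hcge i j _ (by omega), zero_mul]
    | 1, (s + 2) =>
      apply Finset.sum_eq_zero
      intro j _
      rw [hcge k' j _ (by omega), zero_pow hq0, mul_zero]
    | 0, (s + 2) =>
      apply Finset.sum_eq_zero
      intro j _
      rw [hcge k' j _ (by omega), zero_pow hq0, mul_zero]
  -- the main shifted-pairing computation
  have main : ∀ (i k' : Fin t0) (s t : ℕ),
      hPair q ((Polynomial.X : Polynomial F) ^ s • g i)
        ((Polynomial.X : Polynomial F) ^ t • g k') = 0 := by
    intro i k' s t
    have hsupp : ∀ j, (((Polynomial.X : Polynomial F) ^ s • g i) j).support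
        ⊆ Finset.range (s + 2) := by
      intro j m hm
      rw [Finset.mem_range]
      by_contra hcon
      push_neg at hcon
      apply Polynomial.mem_support_iff.mp hm
      rw [Pi.smul_apply, smul_eq_mul, Polynomial.X_pow_mul, Polynomial.coeff_mul_X_pow']
      rw [if_pos (by omega)]
      exact hcge i j _ (by omega)
    rw [hPair_eq_sum _ _ (fun _ => Finset.range (s + 2)) hsupp]
    have hco : ∀ (i' : Fin t0) (s' : ℕ) (j : Fin n) (m : ℕ),
        (((Polynomial.X : Polynomial F) ^ s' • g i') j).coeff m
          = if s' ≤ m then (g i' j).coeff (m - s') else 0 := by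
      intro i' s' j m
      rw [Pi.smul_apply, smul_eq_mul, Polynomial.X_pow_mul, Polynomial.coeff_mul_X_pow']
    simp only [hco]
    rw [Finset.sum_comm]
    apply Finset.sum_eq_zero
    intro m _
    by_cases h1 : s ≤ m
    · by_cases h2 : t ≤ m
      · simp only [if_pos h1, if_pos h2]
        exact key_g i k' (m - s) (m - t)
      · simp [if_neg h2, zero_pow hq0]
    · simp [if_neg h1]
  -- propagate through the span, right argument first
  have H1 : ∀ x ∈ V, ∀ (i : Fin t0) (s t : ℕ),
      hPair q ((Polynomial.X : Polynomial F) ^ s • g i)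
        ((Polynomial.X : Polynomial F) ^ t • x) = 0 := by
    intro x hx
    rw [hV] at hx
    induction hx using Submodule.span_induction with
    | mem y hy =>
      obtain ⟨k', rfl⟩ := hy
      intro i s t
      exact main i k' s t
    | zero =>
      intro i s t
      rw [smul_zero]
      exact hPair_zero_right hq0 _
    | add y z hy hz ihy ihz =>
      intro i s t
      rw [smul_add, hPair_add_right hq_add, ihy i s t, ihz i s t, add_zero]
    | smul c y hy ih =>
      intro i s t
      have hcomm : (Polynomial.X : Polynomial F) ^ t • (c • y)
          = c • ((Polynomial.X : Polynomial F) ^ t • y) := by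
        rw [smul_smul, smul_smul, mul_comm]
      rw [hcomm, hPair_psmul_right hq_add hq0]
      apply Finset.sum_eq_zero
      intro m _
      have : (Polynomial.X : Polynomial F) ^ m • ((Polynomial.X : Polynomial F) ^ t • y)
          = (Polynomial.X : Polynomial F) ^ (m + t) • y := by
        rw [smul_smul, ← pow_add]
      rw [this, ih i s (m + t), mul_zero]
  -- then the left argument
  have H2 : ∀ u ∈ V, ∀ x ∈ V, ∀ (s t : ℕ),
      hPair q ((Polynomial.X : Polynomial F) ^ s • u)
        ((Polynomial.X : Polynomial F) ^ t • x) = 0 := by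
    intro u hu
    rw [hV] at hu
    induction hu using Submodule.span_induction with
    | mem y hy =>
      obtain ⟨i, rfl⟩ := hy
      intro x hx s t
      exact H1 x hx i s t
    | zero =>
      intro x hx s t
      rw [smul_zero]
      exact hPair_zero_left _
    | add y z hy hz ihy ihz =>
      intro x hx s t
      rw [smul_add, hPair_add_left, ihy x hx s t, ihz x hx s t, add_zero]
    | smul c y hy ih =>
      intro x hx s t
      have hcomm : (Polynomial.X : Polynomial F) ^ s • (c • y)
          = c • ((Polynomial.X : Polynomial F) ^ s • y) := by
        rw [smul_smul, smul_smul, mul_comm]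
      rw [hcomm, hPair_psmul_left]
      apply Finset.sum_eq_zero
      intro m _
      have : (Polynomial.X : Polynomial F) ^ m • ((Polynomial.X : Polynomial F) ^ s • y)
          = (Polynomial.X : Polynomial F) ^ (m + s) • y := by
        rw [smul_smul, ← pow_add]
      rw [this, ih x hx (m + s) t, mul_zero]
  intro u hu x hx
  have := H2 u hu x hx 0 0
  simpa using this
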